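/- Let w ∈ M_{t,+}^+ \ M_t^⊥ and let A, B ∈ G(M_t; M_{t,+}) be such that A ≠ ∅ whenever cl[B + G_t^M(w)] = M_t, and B ≠ ∅ whenever cl[A + G_t^M(w)] = M_t. Then G_t^M(w) −. cl[A + B] = cl[ (G_t^M(w) −. A) + (G_t^M(w) −. B) ]. -/

import Mathlib

open MeasureTheory Set Filter
open scoped ENNReal Pointwise

noncomputable section

namespace MultiRisk

/-- The ambient context: a filtered probability space on `[0,T]` satisfying the usual
conditions with `ℱ T = m0`, dimensions `d` and `em ≤ d` (the number of eligible assets),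
and conjugate exponents `p, q ∈ [1,∞]`. -/
structure Ctx (Ω : Type*) where
  m0 : MeasurableSpace Ω
  P : @MeasureTheory.Measure Ω m0
  probP : @MeasureTheory.IsProbabilityMeasure Ω m0 P
  d : ℕ
  em : ℕ
  em_pos : 1 ≤ em
  em_le : em ≤ d
  p : ℝ≥0∞
  hp : 1 ≤ p
  q : ℝ≥0∞
  hpq : 1 / p + 1 / q = 1
  T : ℝ
  hT : 0 ≤ T
  F : @MeasureTheory.Filtration Ω ℝ _ m0
  hFT : F T = m0
  /-- usual conditions: right-continuity of the filtration -/
  right_cont : ∀ t : ℝ, F t = ⨅ s ∈ Set.Ioi t, F s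
  /-- usual conditions: completeness, `F 0` contains all `P`-null sets -/
  complete : ∀ N : Set Ω, P N = 0 → MeasurableSet[F 0] N

variable {Ω : Type*}

instance factLeP (C : Ctx Ω) : Fact (1 ≤ C.p) := ⟨C.hp⟩

/-- portfolio vectors: `ℝ^d` (with an arbitrary norm; here the sup norm). -/
abbrev EV (C : Ctx Ω) : Type _ := Fin C.d → ℝ

/-- the space `L^p(Ω, F_T, P; ℝ^d)`. -/
abbrev LpSp (C : Ctx Ω) : Type _ := MeasureTheory.Lp (α := Ω) (EV C) C.p C.P

/-- pointwise pairing `wᵀu`. -/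
def pairPt (C : Ctx Ω) (w u : Ω → EV C) (ω : Ω) : ℝ := ∑ i, w ω i * u ω i

/-- the bilinear pairing `E[wᵀu]`. -/
def pairF (C : Ctx Ω) (w u : Ω → EV C) : ℝ := ∫ ω, pairPt C w u ω ∂C.P

/-- `F_t`-measurability (in the a.e. sense) of a vector-valued function. -/
def measT (C : Ctx Ω) (t : ℝ) (v : Ω → EV C) : Prop :=
  AEStronglyMeasurable[C.F t] v C.P

/-- `F_t`-measurability (in the a.e. sense) of a scalar function. -/
def measT1 (C : Ctx Ω) (t : ℝ) (φ : Ω → ℝ) : Prop :=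
  AEStronglyMeasurable[C.F t] φ C.P

/-- the subspace `L^p_t` of `F_t`-measurable elements of `L^p`. -/
def Lpt (C : Ctx Ω) (t : ℝ) : Set (LpSp C) := {f | measT C t ⇑f}

/-- the cone `L^p_+` of a.s. componentwise nonnegative elements. -/
def LpPos (C : Ctx Ω) : Set (LpSp C) := {f | ∀ᵐ ω ∂C.P, ∀ i, 0 ≤ (⇑f : Ω → EV C) ω i}

/-- membership of a vector of `ℝ^d` in `M = ℝ^m × {0}^{d-m}`. -/
def inM (C : Ctx Ω) (x : EV C) : Prop := ∀ i : Fin C.d, C.em ≤ (i : ℕ) → x i = 0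

/-- the space `M_t` of eligible portfolios. -/
def Msp (C : Ctx Ω) (t : ℝ) : Set (LpSp C) :=
  {f | f ∈ Lpt C t ∧ ∀ᵐ ω ∂C.P, inM C ((⇑f : Ω → EV C) ω)}

/-- `M_{t,+}`. -/
def MspPos (C : Ctx Ω) (t : ℝ) : Set (LpSp C) := Msp C t ∩ LpPos C

/-- the half space `G_t(w) ⊆ L^p_t`. -/
def G (C : Ctx Ω) (t : ℝ) (w : Ω → EV C) : Set (LpSp C) :=
  {u ∈ Lpt C t | 0 ≤ pairF C w ⇑u}

/-- `G_t^M(w) = G_t(w) ∩ M_t`. -/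
def GM (C : Ctx Ω) (t : ℝ) (w : Ω → EV C) : Set (LpSp C) := G C t w ∩ Msp C t

/-- the conditional "half space" `Γ_t(w) ⊆ L^p_t`. -/
def Gam (C : Ctx Ω) (t : ℝ) (w : Ω → EV C) : Set (LpSp C) :=
  {u ∈ Lpt C t | ∀ᵐ ω ∂C.P, 0 ≤ pairPt C w ⇑u ω}

/-- `Γ_t^M(w) = Γ_t(w) ∩ M_t`. -/
def GamM (C : Ctx Ω) (t : ℝ) (w : Ω → EV C) : Set (LpSp C) := Gam C t w ∩ Msp C t

/-- Minkowski subtraction `A -. B = {m ∈ M_t : B + {m} ⊆ A}` inside `M_t`. -/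
def msub (C : Ctx Ω) (t : ℝ) (A B : Set (LpSp C)) : Set (LpSp C) :=
  {x ∈ Msp C t | ∀ b ∈ B, b + x ∈ A}

/-- the positive dual cone (in `L^q_t`, represented by functions) of a set `S ⊆ L^p`. -/
def posDual (C : Ctx Ω) (t : ℝ) (S : Set (LpSp C)) : Set (Ω → EV C) :=
  {v | MeasureTheory.MemLp v C.q C.P ∧ measT C t v ∧ ∀ u ∈ S, 0 ≤ pairF C v ⇑u}

/-- the orthogonal space `M_t^⊥ ⊆ L^q_t`. -/
def Mperp (C : Ctx Ω) (t : ℝ) : Set (Ω → EV C) :=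
  {v | MeasureTheory.MemLp v C.q C.P ∧ measT C t v ∧ ∀ u ∈ Msp C t, pairF C v ⇑u = 0}

/-- `A^+ := {v ∈ L^q : E[vᵀ Y] ≥ 0 for all Y ∈ A}`. -/
def accDual (C : Ctx Ω) (A : Set (LpSp C)) : Set (Ω → EV C) :=
  {v | MeasureTheory.MemLp v C.q C.P ∧ ∀ Y ∈ A, 0 ≤ pairF C v ⇑Y}

/-- a `d`-dimensional vector probability measure absolutely continuous w.r.t. `P`. -/
def IsVProb (C : Ctx Ω) (Q : Fin C.d → @MeasureTheory.Measure Ω C.m0) : Prop :=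
  (∀ i, @MeasureTheory.IsProbabilityMeasure Ω C.m0 (Q i)) ∧ (∀ i, Q i ≪ C.P)

/-- the density `dQ_i/dP` as a real valued function. -/
def dens (C : Ctx Ω) (Q : Fin C.d → @MeasureTheory.Measure Ω C.m0) (i : Fin C.d) (ω : Ω) : ℝ :=
  (@MeasureTheory.Measure.rnDeriv Ω C.m0 (Q i) C.P ω).toReal

/-- `ξ̄_{t,s}(Q_i)`. -/
def xibar (C : Ctx Ω) (Q : Fin C.d → @MeasureTheory.Measure Ω C.m0) (t s : ℝ) (ω : Ω)
    (i : Fin C.d) : ℝ :=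
  if 0 < MeasureTheory.condExp (C.F t) C.P (dens C Q i) ω then
    MeasureTheory.condExp (C.F s) C.P (dens C Q i) ω /
      MeasureTheory.condExp (C.F t) C.P (dens C Q i) ω
  else 1

/-- the `Q`-conditional expectation `E^Q[X | F_t]` (componentwise). -/
def condExpQ (C : Ctx Ω) (Q : Fin C.d → @MeasureTheory.Measure Ω C.m0) (t : ℝ)
    (X : Ω → EV C) : Ω → EV C :=
  fun ω i => MeasureTheory.condExp (C.F t) C.P (fun ω' => xibar C Q t C.T ω' i * X ω' i) ω

/-- `w_t^s(Q,w) = diag(w) ξ_{t,s}(Q)`. -/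
def wts (C : Ctx Ω) (Q : Fin C.d → @MeasureTheory.Measure Ω C.m0) (w : Ω → EV C)
    (t s : ℝ) : Ω → EV C :=
  fun ω i => w ω i * xibar C Q t s ω i

/-- `Q = P|_{F_t}`, i.e. `ξ_{0,t}(Q) = (1,…,1)`. -/
def restrP (C : Ctx Ω) (Q : Fin C.d → @MeasureTheory.Measure Ω C.m0) (t : ℝ) : Prop :=
  ∀ᵐ ω ∂C.P, ∀ i, xibar C Q 0 t ω i = 1

/-- the set of dual variables `W_t`. -/
def Wdual (C : Ctx Ω) (t : ℝ) :
    Set ((Fin C.d → @MeasureTheory.Measure Ω C.m0) × (Ω → EV C)) :=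
  {Qw | IsVProb C Qw.1 ∧ Qw.2 ∈ posDual C t (MspPos C t) ∧ Qw.2 ∉ Mperp C t ∧
    MeasureTheory.MemLp (wts C Qw.1 Qw.2 t C.T) C.q C.P ∧
    (∀ᵐ ω ∂C.P, ∀ i, 0 ≤ wts C Qw.1 Qw.2 t C.T ω i) ∧ restrP C Qw.1 t}

/-- `W_t^{max}` relative to an acceptance set `A`. -/
def WdualMax (C : Ctx Ω) (t : ℝ) (A : Set (LpSp C)) :
    Set ((Fin C.d → @MeasureTheory.Measure Ω C.m0) × (Ω → EV C)) :=
  {Qw ∈ Wdual C t | wts C Qw.1 Qw.2 t C.T ∈ accDual C A}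

/-- `W_t^e`: dual variables whose vector measure is equivalent to `P`. -/
def WdualE (C : Ctx Ω) (t : ℝ) :
    Set ((Fin C.d → @MeasureTheory.Measure Ω C.m0) × (Ω → EV C)) :=
  {Qw ∈ Wdual C t | ∀ i, C.P ≪ Qw.1 i}

/-- translate of a set of `L^p` elements by a (possibly non-`L^p`) function `g`. -/
def shiftSet (C : Ctx Ω) (g : Ω → EV C) (S : Set (LpSp C)) : Set (LpSp C) :=
  {u | ∃ v ∈ S, ⇑u =ᵐ[C.P] fun ω => g ω + (⇑v : Ω → EV C) ω}

/-- `(E^Q[-X|F_t] + G_t(w)) ∩ M_t`. -/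
def EQhalfG (C : Ctx Ω) (Q : Fin C.d → @MeasureTheory.Measure Ω C.m0) (t : ℝ)
    (X : Ω → EV C) (w : Ω → EV C) : Set (LpSp C) :=
  shiftSet C (condExpQ C Q t (-X)) (G C t w) ∩ Msp C t

/-- `(E^Q[-X|F_t] + Γ_t(w)) ∩ M_t`. -/
def EQhalfGam (C : Ctx Ω) (Q : Fin C.d → @MeasureTheory.Measure Ω C.m0) (t : ℝ)
    (X : Ω → EV C) (w : Ω → EV C) : Set (LpSp C) :=
  shiftSet C (condExpQ C Q t (-X)) (Gam C t w) ∩ Msp C t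

/-- the minimal penalty function `β_t(Q,w)` built from an acceptance set `A`. -/
def penalty (C : Ctx Ω) (t : ℝ) (A : Set (LpSp C))
    (Q : Fin C.d → @MeasureTheory.Measure Ω C.m0) (w : Ω → EV C) : Set (LpSp C) :=
  ⋂ Y ∈ A, EQhalfG C Q t (⇑Y) w

/-- the minimal conditional penalty function `α_t(Q,w)` built from an acceptance set `A`. -/
def condPenalty (C : Ctx Ω) (t : ℝ) (A : Set (LpSp C))
    (Q : Fin C.d → @MeasureTheory.Measure Ω C.m0) (w : Ω → EV C) : Set (LpSp C) :=
  ⋂ Y ∈ A, EQhalfGam C Q t (⇑Y) w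

/-- the elementwise conditional expectation `E^Q[S | F_t]` of a set `S ⊆ L^p`. -/
def EQset (C : Ctx Ω) (Q : Fin C.d → @MeasureTheory.Measure Ω C.m0) (t : ℝ)
    (S : Set (LpSp C)) : Set (LpSp C) :=
  {u | ∃ v ∈ S, ⇑u =ᵐ[C.P] condExpQ C Q t ⇑v}

/-- the product of a bounded measurable function with an `L^p` element. -/
def smulBdd (C : Ctx Ω) (φ : Ω → ℝ) (hφ : MeasureTheory.MemLp φ ∞ C.P) (f : LpSp C) :
    LpSp C :=
  MeasureTheory.MemLp.toLp (φ • ⇑f) ((MeasureTheory.Lp.memLp f).smul hφ)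

/-- a conditional risk measure at time `t`. -/
structure IsCRM (C : Ctx Ω) (t : ℝ) (R : LpSp C → Set (LpSp C)) : Prop where
  subM : ∀ X, R X ⊆ Msp C t
  upper : ∀ X, R X + MspPos C t = R X
  transl : ∀ X, ∀ mt ∈ Msp C t, R (X + mt) = (fun u => u - mt) '' R X
  mono : ∀ X Y : LpSp C, Y - X ∈ LpPos C → R X ⊆ R Y
  finite0 : R 0 ≠ ∅ ∧ R 0 ≠ Msp C t

/-- normalization: `R(X) = R(X) + R(0)`. -/
def Normalized (C : Ctx Ω) (R : LpSp C → Set (LpSp C)) : Prop :=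
  ∀ X, R X + R 0 = R X

/-- convexity of a set-valued risk measure. -/
def ConvexRM (C : Ctx Ω) (R : LpSp C → Set (LpSp C)) : Prop :=
  ∀ X Y : LpSp C, ∀ l : ℝ, 0 ≤ l → l ≤ 1 →
    l • R X + (1 - l) • R Y ⊆ R (l • X + (1 - l) • Y)

/-- positive homogeneity. -/
def PosHom (C : Ctx Ω) (R : LpSp C → Set (LpSp C)) : Prop :=
  ∀ X : LpSp C, ∀ l : ℝ, 0 < l → R (l • X) = l • R X

/-- conditional convexity. -/
def CondConvexRM (C : Ctx Ω) (t : ℝ) (R : LpSp C → Set (LpSp C)) : Prop :=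
  ∀ (φ ψ : Ω → ℝ) (hφ : MeasureTheory.MemLp φ ∞ C.P) (hψ : MeasureTheory.MemLp ψ ∞ C.P),
    measT1 C t φ → measT1 C t ψ →
    (∀ᵐ ω ∂C.P, 0 ≤ φ ω ∧ 0 ≤ ψ ω ∧ φ ω + ψ ω = 1) →
    ∀ X Y : LpSp C,
      smulBdd C φ hφ '' R X + smulBdd C ψ hψ '' R Y ⊆
        R (smulBdd C φ hφ X + smulBdd C ψ hψ Y)

/-- conditional positive homogeneity. -/
def CondPosHom (C : Ctx Ω) (t : ℝ) (R : LpSp C → Set (LpSp C)) : Prop :=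
  ∀ (φ : Ω → ℝ) (hφ : MeasureTheory.MemLp φ ∞ C.P), measT1 C t φ →
    (∀ᵐ ω ∂C.P, 0 < φ ω) → ∀ X : LpSp C, R (smulBdd C φ hφ X) = smulBdd C φ hφ '' R X

/-- closedness of the graph. -/
def ClosedRM (C : Ctx Ω) (R : LpSp C → Set (LpSp C)) : Prop :=
  IsClosed {z : LpSp C × LpSp C | z.2 ∈ R z.1}

/-- the image space `G(M_t; M_{t,+})`. -/
def GPlus (C : Ctx Ω) (t : ℝ) : Set (Set (LpSp C)) :=
  {D | D ⊆ Msp C t ∧ D = closure (convexHull ℝ (D + MspPos C t))}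

/-- the collection `G(M_t; M_{t,-})`. -/
def GMinus (C : Ctx Ω) (t : ℝ) : Set (Set (LpSp C)) :=
  {D | D ⊆ Msp C t ∧ D = closure (convexHull ℝ (D + -MspPos C t))}

/-- convex upper continuity. -/
def CUC (C : Ctx Ω) (t : ℝ) (R : LpSp C → Set (LpSp C)) : Prop :=
  ∀ D ∈ GMinus C t, IsClosed {X : LpSp C | (R X ∩ D).Nonempty}

/-- a conditionally convex subset of `L^p`. -/
def CondConvexSet (C : Ctx Ω) (t : ℝ) (D : Set (LpSp C)) : Prop :=
  ∀ (φ ψ : Ω → ℝ) (hφ : MeasureTheory.MemLp φ ∞ C.P) (hψ : MeasureTheory.MemLp ψ ∞ C.P),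
    measT1 C t φ → measT1 C t ψ →
    (∀ᵐ ω ∂C.P, 0 ≤ φ ω ∧ 0 ≤ ψ ω ∧ φ ω + ψ ω = 1) →
    ∀ x ∈ D, ∀ y ∈ D, smulBdd C φ hφ x + smulBdd C ψ hψ y ∈ D

/-- conditionally convex upper continuity. -/
def CCUC (C : Ctx Ω) (t : ℝ) (R : LpSp C → Set (LpSp C)) : Prop :=
  ∀ D ∈ GMinus C t, CondConvexSet C t D → IsClosed {X : LpSp C | (R X ∩ D).Nonempty}

/-- the acceptance set of a conditional risk measure. -/
def Acc (C : Ctx Ω) (R : LpSp C → Set (LpSp C)) : Set (LpSp C) := {X | 0 ∈ R X}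

/-- multiportfolio time consistency of a dynamic risk measure. -/
def MPTC (C : Ctx Ω) (R : ℝ → LpSp C → Set (LpSp C)) : Prop :=
  ∀ t s : ℝ, 0 ≤ t → t < s → s ≤ C.T → ∀ X : LpSp C, ∀ 𝒴 : Set (LpSp C),
    R s X ⊆ ⋃ Y ∈ 𝒴, R s Y → R t X ⊆ ⋃ Y ∈ 𝒴, R t Y

/-- the recession cone of a subset of `M_t`. -/
def recc (C : Ctx Ω) (t : ℝ) (S : Set (LpSp C)) : Set (LpSp C) :=
  {r ∈ Msp C t | ∀ u ∈ S, ∀ l : ℝ, 0 ≤ l → u + l • r ∈ S}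

end MultiRisk

namespace MultiRisk
variable {Ω : Type*}


section Helpers
variable {C : Ctx Ω} {t : ℝ} {w : Ω → EV C}

lemma pair_integrable (hw : MeasureTheory.MemLp w C.q C.P) (u : LpSp C) :
    MeasureTheory.Integrable (pairPt C w ⇑u) C.P := by
  have hpq : (1 : ℝ≥0∞) / 1 = 1 / C.q + 1 / C.p := by
    rw [one_div_one, add_comm (1/C.q), C.hpq]
  have hi : ∀ i : Fin C.d,
      MeasureTheory.Integrable (fun ω => w ω i * (⇑u : Ω → EV C) ω i) C.P := by
    intro i
    have hwi : MeasureTheory.MemLp (fun ω => w ω i) C.q C.P := by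
      have := (ContinuousLinearMap.proj (R := ℝ) (φ := fun _ : Fin C.d => ℝ) i).comp_memLp' hw
      exact this
    have hui : MeasureTheory.MemLp (fun ω => (⇑u : Ω → EV C) ω i) C.p C.P := by
      have := (ContinuousLinearMap.proj (R := ℝ) (φ := fun _ : Fin C.d => ℝ) i).comp_memLp u
      exact this
    have h1 : MeasureTheory.MemLp
        ((fun ω => w ω i) • (fun ω => (⇑u : Ω → EV C) ω i)) 1 C.P :=
      hui.smul hwi (hpqr := ⟨by simpa [one_div] using hpq.symm⟩)
    rw [← MeasureTheory.memLp_one_iff_integrable]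
    exact h1
  have := MeasureTheory.integrable_finset_sum (μ := C.P) Finset.univ
    (fun i (_ : i ∈ Finset.univ) => hi i)
  exact this

lemma pairPt_congr {f g : Ω → EV C} (h : f =ᵐ[C.P] g) :
    pairPt C w f =ᵐ[C.P] pairPt C w g := by
  filter_upwards [h] with ω hω
  simp [pairPt, hω]

lemma pairF_congr {f g : Ω → EV C} (h : f =ᵐ[C.P] g) :
    pairF C w f = pairF C w g :=
  MeasureTheory.integral_congr_ae (pairPt_congr h)

lemma pairF_add (hw : MeasureTheory.MemLp w C.q C.P) (u v : LpSp C) :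
    pairF C w ⇑(u + v) = pairF C w ⇑u + pairF C w ⇑v := by
  have h1 : pairF C w ⇑(u + v) = pairF C w (⇑u + ⇑v) :=
    pairF_congr (MeasureTheory.Lp.coeFn_add u v)
  have h2 : pairPt C w (⇑u + ⇑v) = pairPt C w ⇑u + pairPt C w ⇑v := by
    funext ω
    simp [pairPt, mul_add, Finset.sum_add_distrib]
  rw [h1, pairF, h2]
  exact MeasureTheory.integral_add (pair_integrable hw u) (pair_integrable hw v)

lemma pairF_smul (c : ℝ) (u : LpSp C) :
    pairF C w ⇑(c • u) = c * pairF C w ⇑u := by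
  have h1 : pairF C w ⇑(c • u) = pairF C w (c • ⇑u) :=
    pairF_congr (MeasureTheory.Lp.coeFn_smul c u)
  have h2 : pairPt C w (c • ⇑u) = fun ω => c * pairPt C w ⇑u ω := by
    funext ω
    simp [pairPt, Finset.mul_sum]
    ring_nf
    exact Finset.sum_congr rfl fun i _ => by ring
  rw [h1, pairF, h2, MeasureTheory.integral_const_mul]
  rfl

lemma pairF_sub (hw : MeasureTheory.MemLp w C.q C.P) (u v : LpSp C) :
    pairF C w ⇑(u - v) = pairF C w ⇑u - pairF C w ⇑v := by
  have h := pairF_add hw (u - v) v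
  rw [sub_add_cancel] at h
  linarith

lemma pairF_bound (hw : MeasureTheory.MemLp w C.q C.P) (u : LpSp C) :
    |pairF C w ⇑u| ≤ (∑ i, (MeasureTheory.eLpNorm (fun ω => w ω i) C.q C.P).toReal) * ‖u‖ := by
  have hpq : (1 : ℝ≥0∞) / 1 = 1 / C.q + 1 / C.p := by
    rw [one_div_one, add_comm (1/C.q), C.hpq]
  have hwi : ∀ i : Fin C.d, MeasureTheory.MemLp (fun ω => w ω i) C.q C.P := by
    intro i
    have := (ContinuousLinearMap.proj (R := ℝ) (φ := fun _ : Fin C.d => ℝ) i).comp_memLp' hw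
    exact this
  have hui : ∀ i : Fin C.d, MeasureTheory.MemLp (fun ω => (⇑u : Ω → EV C) ω i) C.p C.P := by
    intro i
    have := (ContinuousLinearMap.proj (R := ℝ) (φ := fun _ : Fin C.d => ℝ) i).comp_memLp u
    exact this
  have hint : ∀ i : Fin C.d,
      MeasureTheory.Integrable (fun ω => w ω i * (⇑u : Ω → EV C) ω i) C.P := by
    intro i
    rw [← MeasureTheory.memLp_one_iff_integrable]
    exact (hui i).smul (hwi i) (hpqr := ⟨by simpa [one_div] using hpq.symm⟩)
  have hsplit : pairF C w ⇑u = ∑ i, ∫ ω, w ω i * (⇑u : Ω → EV C) ω i ∂C.P := by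
    rw [pairF]
    have : pairPt C w ⇑u = fun ω => ∑ i, w ω i * (⇑u : Ω → EV C) ω i := rfl
    rw [this]
    exact MeasureTheory.integral_finset_sum Finset.univ fun i _ => hint i
  have hterm : ∀ i : Fin C.d,
      |∫ ω, w ω i * (⇑u : Ω → EV C) ω i ∂C.P| ≤
        (MeasureTheory.eLpNorm (fun ω => w ω i) C.q C.P).toReal * ‖u‖ := by
    intro i
    have h1 : |∫ ω, w ω i * (⇑u : Ω → EV C) ω i ∂C.P| ≤
        ∫ ω, ‖w ω i * (⇑u : Ω → EV C) ω i‖ ∂C.P :=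
      by
        rw [← Real.norm_eq_abs]
        exact MeasureTheory.norm_integral_le_integral_norm _
    have h2 : ∫ ω, ‖w ω i * (⇑u : Ω → EV C) ω i‖ ∂C.P =
        (MeasureTheory.eLpNorm (fun ω => w ω i * (⇑u : Ω → EV C) ω i) 1 C.P).toReal := by
      rw [MeasureTheory.integral_norm_eq_lintegral_enorm (hint i).1,
        MeasureTheory.eLpNorm_one_eq_lintegral_enorm]
    have h3 : MeasureTheory.eLpNorm (fun ω => w ω i * (⇑u : Ω → EV C) ω i) 1 C.P ≤
        MeasureTheory.eLpNorm (fun ω => w ω i) C.q C.P *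
          MeasureTheory.eLpNorm (fun ω => (⇑u : Ω → EV C) ω i) C.p C.P := by
      have := MeasureTheory.eLpNorm_smul_le_mul_eLpNorm (hui i).1 (hwi i).1 (p := C.q) (q := C.p) (r := 1)
        (hpqr := ⟨by simpa [one_div] using hpq.symm⟩)
      exact this
    have h4 : MeasureTheory.eLpNorm (fun ω => (⇑u : Ω → EV C) ω i) C.p C.P ≤
        MeasureTheory.eLpNorm (⇑u) C.p C.P :=
      MeasureTheory.eLpNorm_mono_ae (Filter.Eventually.of_forall fun ω =>
        norm_le_pi_norm ((⇑u : Ω → EV C) ω) i)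
    have h5 : MeasureTheory.eLpNorm (fun ω => w ω i * (⇑u : Ω → EV C) ω i) 1 C.P ≤
        MeasureTheory.eLpNorm (fun ω => w ω i) C.q C.P *
          MeasureTheory.eLpNorm (⇑u) C.p C.P :=
      h3.trans (mul_le_mul_right h4 _)
    have hfin : MeasureTheory.eLpNorm (fun ω => w ω i) C.q C.P *
        MeasureTheory.eLpNorm (⇑u) C.p C.P ≠ ⊤ :=
      ENNReal.mul_ne_top (hwi i).eLpNorm_ne_top (MeasureTheory.Lp.eLpNorm_ne_top u)
    have h6 := ENNReal.toReal_mono hfin h5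
    rw [ENNReal.toReal_mul] at h6
    calc |∫ ω, w ω i * (⇑u : Ω → EV C) ω i ∂C.P| ≤ _ := h1
      _ = _ := h2
      _ ≤ _ := h6
      _ = (MeasureTheory.eLpNorm (fun ω => w ω i) C.q C.P).toReal * ‖u‖ := by
          rw [MeasureTheory.Lp.norm_def]
  calc |pairF C w ⇑u| = |∑ i, ∫ ω, w ω i * (⇑u : Ω → EV C) ω i ∂C.P| := by rw [hsplit]
    _ ≤ ∑ i, |∫ ω, w ω i * (⇑u : Ω → EV C) ω i ∂C.P| := Finset.abs_sum_le_sum_abs _ _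
    _ ≤ ∑ i, (MeasureTheory.eLpNorm (fun ω => w ω i) C.q C.P).toReal * ‖u‖ :=
        Finset.sum_le_sum fun i _ => hterm i
    _ = _ := by rw [← Finset.sum_mul]

lemma pairF_continuous (hw : MeasureTheory.MemLp w C.q C.P) :
    Continuous (fun u : LpSp C => pairF C w ⇑u) := by
  set K : ℝ := ∑ i, (MeasureTheory.eLpNorm (fun ω => w ω i) C.q C.P).toReal with hK
  apply (LipschitzWith.of_dist_le_mul (K := K.toNNReal)
    (f := fun u : LpSp C => pairF C w ⇑u) ?_).continuous
  intro u v
  rw [Real.dist_eq, ← pairF_sub hw u v, dist_eq_norm]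
  calc |pairF C w ⇑(u - v)| ≤ K * ‖u - v‖ := pairF_bound hw (u - v)
    _ ≤ (K.toNNReal : ℝ) * ‖u - v‖ :=
        mul_le_mul_of_nonneg_right (Real.le_coe_toNNReal K) (norm_nonneg _)

/-- projection of `EV C` onto the coordinates `≥ em`. -/
def projTail (C : Ctx Ω) : EV C →L[ℝ] EV C :=
  ContinuousLinearMap.pi (fun i => if C.em ≤ (i : ℕ) then ContinuousLinearMap.proj i else 0)

lemma projTail_eq_zero_iff (C : Ctx Ω) (x : EV C) : projTail C x = 0 ↔ inM C x := by
  constructor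
  · intro h i hi
    have := congrFun h i
    simpa [projTail, ContinuousLinearMap.pi_apply, hi] using this
  · intro h
    funext i
    by_cases hi : C.em ≤ (i : ℕ)
    · simpa [projTail, ContinuousLinearMap.pi_apply, hi] using h i hi
    · simp [projTail, ContinuousLinearMap.pi_apply, hi]

set_option synthInstance.maxHeartbeats 1000000 in
lemma msp_isClosed (C : Ctx Ω) (t : ℝ) : IsClosed (Msp C t) := by
  have h1 : IsClosed (Lpt C t) :=
    (MeasureTheory.isComplete_aestronglyMeasurable (C.F.le t)).isClosed
  have h2 : IsClosed {f : LpSp C | ∀ᵐ ω ∂C.P, inM C ((⇑f : Ω → EV C) ω)} := by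
    have heq : {f : LpSp C | ∀ᵐ ω ∂C.P, inM C ((⇑f : Ω → EV C) ω)} =
        (projTail C).compLpL C.p C.P ⁻¹' {0} := by
      ext f
      simp only [Set.mem_setOf_eq, Set.mem_preimage, Set.mem_singleton_iff,
        MeasureTheory.Lp.eq_zero_iff_ae_eq_zero]
      constructor
      · intro h
        filter_upwards [h, ContinuousLinearMap.coeFn_compLpL (projTail C) f]
          with ω h1 h2
        rw [h2]
        simpa [projTail_eq_zero_iff] using h1
      · intro h
        filter_upwards [h, ContinuousLinearMap.coeFn_compLpL (projTail C) f]
          with ω h1 h2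
        rw [← projTail_eq_zero_iff]
        rw [h2] at h1
        simpa using h1
    rw [heq]
    exact IsClosed.preimage (ContinuousLinearMap.continuous _) isClosed_singleton
  exact (h1.inter h2)

lemma msp_zero (C : Ctx Ω) (t : ℝ) : (0 : LpSp C) ∈ Msp C t := by
  constructor
  · exact ⟨(0 : Ω → EV C), @stronglyMeasurable_zero _ _ (C.F t) _ _,
      MeasureTheory.Lp.coeFn_zero _ _ _⟩
  · filter_upwards [MeasureTheory.Lp.coeFn_zero (EV C) C.p C.P] with ω h
    intro i _
    rw [h]
    rfl

lemma msp_add {C : Ctx Ω} {t : ℝ} {u v : LpSp C} (hu : u ∈ Msp C t) (hv : v ∈ Msp C t) :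
    u + v ∈ Msp C t := by
  constructor
  · exact (hu.1.add hv.1).congr (MeasureTheory.Lp.coeFn_add u v).symm
  · filter_upwards [hu.2, hv.2, MeasureTheory.Lp.coeFn_add u v] with ω h1 h2 h3
    intro i hi
    rw [h3]
    simp [Pi.add_apply, h1 i hi, h2 i hi]

lemma msp_smul {C : Ctx Ω} {t : ℝ} {u : LpSp C} (c : ℝ) (hu : u ∈ Msp C t) :
    c • u ∈ Msp C t := by
  constructor
  · exact (hu.1.const_smul c).congr (MeasureTheory.Lp.coeFn_smul c u).symm
  · filter_upwards [hu.2, MeasureTheory.Lp.coeFn_smul c u] with ω h1 h2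
    intro i hi
    rw [h2]
    simp [Pi.smul_apply, h1 i hi]

lemma msp_sub {C : Ctx Ω} {t : ℝ} {u v : LpSp C} (hu : u ∈ Msp C t) (hv : v ∈ Msp C t) :
    u - v ∈ Msp C t := by
  rw [sub_eq_add_neg, ← neg_one_smul ℝ v]
  exact msp_add hu (msp_smul (-1) hv)

lemma mem_GM_iff {C : Ctx Ω} {t : ℝ} {w : Ω → EV C} {x : LpSp C} (hx : x ∈ Msp C t) :
    x ∈ GM C t w ↔ 0 ≤ pairF C w ⇑x := by
  constructor
  · exact fun h => h.1.2
  · exact fun h => ⟨⟨hx.1, h⟩, hx⟩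

lemma mem_msub_iff {C : Ctx Ω} {t : ℝ} {w : Ω → EV C} (hw : MeasureTheory.MemLp w C.q C.P)
    {S : Set (LpSp C)} (hS : S ⊆ Msp C t) {x : LpSp C} :
    x ∈ msub C t (GM C t w) S ↔
      x ∈ Msp C t ∧ ∀ s ∈ S, 0 ≤ pairF C w ⇑s + pairF C w ⇑x := by
  constructor
  · rintro ⟨hx, h⟩
    refine ⟨hx, fun s hs => ?_⟩
    have := (mem_GM_iff (msp_add (hS hs) hx)).mp (h s hs)
    rwa [pairF_add hw] at this
  · rintro ⟨hx, h⟩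
    refine ⟨hx, fun s hs => (mem_GM_iff (msp_add (hS hs) hx)).mpr ?_⟩
    rw [pairF_add hw]
    exact h s hs

lemma exists_pair_eq {C : Ctx Ω} {t : ℝ} {w : Ω → EV C} {u0 : LpSp C}
    (hu0 : u0 ∈ Msp C t) (hc : pairF C w ⇑u0 ≠ 0) (r : ℝ) :
    ∃ x ∈ Msp C t, pairF C w ⇑x = r :=
  ⟨(r / pairF C w ⇑u0) • u0, msp_smul _ hu0, by
    rw [pairF_smul]
    exact div_mul_cancel₀ r hc⟩

lemma exists_nonzero {C : Ctx Ω} {t : ℝ} {w : Ω → EV C}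
    (hw : w ∈ posDual C t (MspPos C t) \ Mperp C t) :
    ∃ u0 ∈ Msp C t, pairF C w ⇑u0 ≠ 0 := by
  obtain ⟨⟨hq, hm, _⟩, hnp⟩ := hw
  by_contra h
  push_neg at h
  exact hnp ⟨hq, hm, fun u hu => h u hu⟩

lemma mspAdd_self {C : Ctx Ω} {t : ℝ} {D : Set (LpSp C)} (hD : D ⊆ Msp C t)
    (hne : D.Nonempty) : Msp C t + D = Msp C t := by
  obtain ⟨d, hd⟩ := hne
  apply Set.Subset.antisymm
  · rintro z ⟨m, hm, x, hx, rfl⟩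
    exact msp_add hm (hD hx)
  · intro m hm
    exact ⟨m - d, msp_sub hm (hD hd), d, hd, sub_add_cancel m d⟩

end Helpers

/-- the Minkowski subtraction from a half space distributes over closed
sums (Proposition `prop_penalty1`). -/
theorem statement17 (C : Ctx Ω) (t : ℝ) (ht0 : 0 ≤ t) (htT : t ≤ C.T) (w : Ω → EV C)
    (hw : w ∈ posDual C t (MspPos C t) \ Mperp C t)
    (A B : Set (LpSp C)) (hA : A ∈ GPlus C t) (hB : B ∈ GPlus C t)
    (hAne : closure (B + GM C t w) = Msp C t → A.Nonempty)
    (hBne : closure (A + GM C t w) = Msp C t → B.Nonempty) :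
    msub C t (GM C t w) (closure (A + B)) =
      closure (msub C t (GM C t w) A + msub C t (GM C t w) B) := by
  obtain ⟨hwq, hwm, hwpos⟩ := hw.1
  obtain ⟨u0, hu0, hc⟩ := exists_nonzero hw
  have hMcl := msp_isClosed C t
  have hGMsub : GM C t w ⊆ Msp C t := Set.inter_subset_right
  have hAM : A ⊆ Msp C t := hA.1
  have hBM : B ⊆ Msp C t := hB.1
  have hABM : A + B ⊆ Msp C t := by
    rintro z ⟨x, hx, y, hy, rfl⟩
    exact msp_add (hAM hx) (hBM hy)
  have hclABM : closure (A + B) ⊆ Msp C t := closure_minimal hABM hMcl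
  have hmsubM : ∀ S : Set (LpSp C), msub C t (GM C t w) S ⊆ Msp C t := fun S z hz => hz.1
  have hmsub_empty : msub C t (GM C t w) (∅ : Set (LpSp C)) = Msp C t := by
    ext x
    simp [msub]
  -- the case where one of the penalty values is unbounded below
  have hkey_unbdd : ∀ D : Set (LpSp C), D ⊆ Msp C t →
      ¬BddBelow ((fun u : LpSp C => pairF C w ⇑u) '' D) →
      ∀ y ∈ Msp C t, y ∈ D + GM C t w := by
    intro D hD hbdd y hy
    obtain ⟨r, hrD, hrlt⟩ := not_bddBelow_iff.mp hbdd (pairF C w ⇑y)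
    obtain ⟨d, hd, rfl⟩ := hrD
    refine ⟨d, hd, y - d, ?_, add_sub_cancel d y⟩
    refine (mem_GM_iff (msp_sub hy (hD hd))).mpr ?_
    rw [pairF_sub hwq]
    linarith
  by_cases hAe : A = ∅
  · -- `A = ∅` : both sides equal `M_t`
    have hLHS : msub C t (GM C t w) (closure (A + B)) = Msp C t := by
      rw [hAe, Set.empty_add, closure_empty, hmsub_empty]
    rw [hLHS, hAe, hmsub_empty]
    by_cases hBe : B = ∅
    · rw [hBe, hmsub_empty, mspAdd_self (le_refl (Msp C t)) ⟨0, msp_zero C t⟩,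
        hMcl.closure_eq]
    · have hBne' : B.Nonempty := Set.nonempty_iff_ne_empty.mpr hBe
      by_cases hbdd : BddBelow ((fun u : LpSp C => pairF C w ⇑u) '' B)
      · obtain ⟨β, hβ⟩ := hbdd
        obtain ⟨x, hxM, hxφ⟩ := exists_pair_eq hu0 hc (-β)
        have hxmem : x ∈ msub C t (GM C t w) B := by
          refine (mem_msub_iff hwq hBM).mpr ⟨hxM, fun s hs => ?_⟩
          have : β ≤ pairF C w ⇑s := hβ (Set.mem_image_of_mem _ hs)
          rw [hxφ]
          linarith
        rw [mspAdd_self (hmsubM B) ⟨x, hxmem⟩, hMcl.closure_eq]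
      · exfalso
        have hBGM : B + GM C t w = Msp C t := by
          apply Set.Subset.antisymm
          · rintro z ⟨x, hx, y, hy, rfl⟩
            exact msp_add (hBM hx) (hGMsub hy)
          · exact fun y hy => hkey_unbdd B hBM hbdd y hy
        have : closure (B + GM C t w) = Msp C t := by rw [hBGM, hMcl.closure_eq]
        obtain ⟨x, hx⟩ := hAne this
        rw [hAe] at hx
        exact hx
  by_cases hBe : B = ∅
  · -- `B = ∅` : symmetric
    have hLHS : msub C t (GM C t w) (closure (A + B)) = Msp C t := by
      rw [hBe, Set.add_empty, closure_empty, hmsub_empty]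
    rw [hLHS, hBe, hmsub_empty]
    have hAne' : A.Nonempty := Set.nonempty_iff_ne_empty.mpr hAe
    by_cases hbdd : BddBelow ((fun u : LpSp C => pairF C w ⇑u) '' A)
    · obtain ⟨β, hβ⟩ := hbdd
      obtain ⟨x, hxM, hxφ⟩ := exists_pair_eq hu0 hc (-β)
      have hxmem : x ∈ msub C t (GM C t w) A := by
        refine (mem_msub_iff hwq hAM).mpr ⟨hxM, fun s hs => ?_⟩
        have : β ≤ pairF C w ⇑s := hβ (Set.mem_image_of_mem _ hs)
        rw [hxφ]
        linarith
      rw [add_comm (msub C t (GM C t w) A),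
        mspAdd_self (hmsubM A) ⟨x, hxmem⟩, hMcl.closure_eq]
    · exfalso
      have hAGM : A + GM C t w = Msp C t := by
        apply Set.Subset.antisymm
        · rintro z ⟨x, hx, y, hy, rfl⟩
          exact msp_add (hAM hx) (hGMsub hy)
        · exact fun y hy => hkey_unbdd A hAM hbdd y hy
      have : closure (A + GM C t w) = Msp C t := by rw [hAGM, hMcl.closure_eq]
      obtain ⟨x, hx⟩ := hBne this
      rw [hBe] at hx
      exact hx
  -- main case: both nonempty
  have hAne' : A.Nonempty := Set.nonempty_iff_ne_empty.mpr hAe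
  have hBne' : B.Nonempty := Set.nonempty_iff_ne_empty.mpr hBe
  have hmsub_unbdd : ∀ D : Set (LpSp C), D ⊆ Msp C t →
      ¬BddBelow ((fun u : LpSp C => pairF C w ⇑u) '' D) →
      msub C t (GM C t w) D = ∅ := by
    intro D hD hbdd
    rw [Set.eq_empty_iff_forall_notMem]
    intro x hx
    obtain ⟨hxM, hxall⟩ := (mem_msub_iff hwq hD).mp hx
    exact hbdd ⟨-pairF C w ⇑x, by
      rintro r ⟨d, hd, rfl⟩
      have := hxall d hd
      linarith⟩
  by_cases hbA : BddBelow ((fun u : LpSp C => pairF C w ⇑u) '' A)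
  swap
  · -- `inf` over A is `-∞`: both sides are empty
    have hRHS : msub C t (GM C t w) A = ∅ := hmsub_unbdd A hAM hbA
    rw [hRHS, Set.empty_add, closure_empty, Set.eq_empty_iff_forall_notMem]
    intro x hx
    obtain ⟨hxM, hxall⟩ := (mem_msub_iff hwq hclABM).mp hx
    obtain ⟨b0, hb0⟩ := hBne'
    apply hbA
    refine ⟨-(pairF C w ⇑b0 + pairF C w ⇑x), ?_⟩
    rintro r ⟨d, hd, rfl⟩
    have hmem : d + b0 ∈ closure (A + B) := subset_closure ⟨d, hd, b0, hb0, rfl⟩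
    have := hxall _ hmem
    rw [pairF_add hwq] at this
    linarith
  by_cases hbB : BddBelow ((fun u : LpSp C => pairF C w ⇑u) '' B)
  swap
  · -- `inf` over B is `-∞`: both sides are empty
    have hRHS : msub C t (GM C t w) B = ∅ := hmsub_unbdd B hBM hbB
    rw [hRHS, Set.add_empty, closure_empty, Set.eq_empty_iff_forall_notMem]
    intro x hx
    obtain ⟨hxM, hxall⟩ := (mem_msub_iff hwq hclABM).mp hx
    obtain ⟨a0, ha0⟩ := hAne'
    apply hbB
    refine ⟨-(pairF C w ⇑a0 + pairF C w ⇑x), ?_⟩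
    rintro r ⟨d, hd, rfl⟩
    have hmem : a0 + d ∈ closure (A + B) := subset_closure ⟨a0, ha0, d, hd, rfl⟩
    have := hxall _ hmem
    rw [pairF_add hwq] at this
    linarith
  -- both infima are finite
  set a := sInf ((fun u : LpSp C => pairF C w ⇑u) '' A) with ha
  set b := sInf ((fun u : LpSp C => pairF C w ⇑u) '' B) with hb
  have haA : ∀ x ∈ A, a ≤ pairF C w ⇑x := fun x hx =>
    csInf_le hbA (Set.mem_image_of_mem _ hx)
  have hbB' : ∀ x ∈ B, b ≤ pairF C w ⇑x := fun x hx =>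
    csInf_le hbB (Set.mem_image_of_mem _ hx)
  have hage : ∀ r : ℝ, (∀ x ∈ A, r ≤ pairF C w ⇑x) → r ≤ a := by
    intro r h
    refine le_csInf (hAne'.image _) ?_
    rintro s ⟨x, hx, rfl⟩
    exact h x hx
  have hbge : ∀ r : ℝ, (∀ x ∈ B, r ≤ pairF C w ⇑x) → r ≤ b := by
    intro r h
    refine le_csInf (hBne'.image _) ?_
    rintro s ⟨x, hx, rfl⟩
    exact h x hx
  have hcont : Continuous (fun u : LpSp C => pairF C w ⇑u) := pairF_continuous hwq
  have hTcl : ∀ r : ℝ, IsClosed {z : LpSp C | z ∈ Msp C t ∧ r ≤ pairF C w ⇑z} := by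
    intro r
    have : {z : LpSp C | z ∈ Msp C t ∧ r ≤ pairF C w ⇑z} =
        Msp C t ∩ (fun u : LpSp C => pairF C w ⇑u) ⁻¹' Set.Ici r := rfl
    rw [this]
    exact hMcl.inter (isClosed_Ici.preimage hcont)
  -- identify the three `msub` sets
  have hLHS : msub C t (GM C t w) (closure (A + B)) =
      {z : LpSp C | z ∈ Msp C t ∧ -(a + b) ≤ pairF C w ⇑z} := by
    ext x
    rw [mem_msub_iff hwq hclABM, Set.mem_setOf_eq]
    constructor
    · rintro ⟨hxM, hxall⟩
      refine ⟨hxM, ?_⟩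
      have h1 : ∀ y ∈ A, -b - pairF C w ⇑x ≤ pairF C w ⇑y := by
        intro y hy
        have h2 : -(pairF C w ⇑y) - pairF C w ⇑x ≤ b := by
          apply hbge
          intro z hz
          have hmem : y + z ∈ closure (A + B) := subset_closure ⟨y, hy, z, hz, rfl⟩
          have := hxall _ hmem
          rw [pairF_add hwq] at this
          linarith
        linarith
      have := hage _ h1
      linarith
    · rintro ⟨hxM, hxge⟩
      refine ⟨hxM, fun s hs => ?_⟩
      have hsub : closure (A + B) ⊆
          (fun u : LpSp C => pairF C w ⇑u) ⁻¹' Set.Ici (-(pairF C w ⇑x)) := by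
        apply closure_minimal ?_ (isClosed_Ici.preimage hcont)
        rintro z ⟨y, hy, z', hz', rfl⟩
        have := haA y hy
        have := hbB' z' hz'
        have h3 : pairF C w ⇑(y + z') = pairF C w ⇑y + pairF C w ⇑z' := pairF_add hwq y z'
        simp only [Set.mem_preimage, Set.mem_Ici, h3]
        linarith
      have := hsub hs
      simp only [Set.mem_preimage, Set.mem_Ici] at this
      linarith
  have hmA : msub C t (GM C t w) A =
      {z : LpSp C | z ∈ Msp C t ∧ -a ≤ pairF C w ⇑z} := by
    ext x
    rw [mem_msub_iff hwq hAM, Set.mem_setOf_eq]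
    constructor
    · rintro ⟨hxM, hxall⟩
      refine ⟨hxM, ?_⟩
      have := hage (-(pairF C w ⇑x)) (fun y hy => by linarith [hxall y hy])
      linarith
    · rintro ⟨hxM, hxge⟩
      exact ⟨hxM, fun s hs => by linarith [haA s hs]⟩
  have hmB : msub C t (GM C t w) B =
      {z : LpSp C | z ∈ Msp C t ∧ -b ≤ pairF C w ⇑z} := by
    ext x
    rw [mem_msub_iff hwq hBM, Set.mem_setOf_eq]
    constructor
    · rintro ⟨hxM, hxall⟩
      refine ⟨hxM, ?_⟩
      have := hbge (-(pairF C w ⇑x)) (fun y hy => by linarith [hxall y hy])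
      linarith
    · rintro ⟨hxM, hxge⟩
      exact ⟨hxM, fun s hs => by linarith [hbB' s hs]⟩
  -- sum of the two half spaces
  have hsum : {z : LpSp C | z ∈ Msp C t ∧ -a ≤ pairF C w ⇑z} +
      {z : LpSp C | z ∈ Msp C t ∧ -b ≤ pairF C w ⇑z} =
      {z : LpSp C | z ∈ Msp C t ∧ -(a + b) ≤ pairF C w ⇑z} := by
    apply Set.Subset.antisymm
    · rintro z ⟨x, ⟨hxM, hxge⟩, y, ⟨hyM, hyge⟩, rfl⟩
      refine ⟨msp_add hxM hyM, ?_⟩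
      rw [pairF_add hwq]
      linarith
    · rintro z ⟨hzM, hzge⟩
      obtain ⟨y, hyM, hyφ⟩ := exists_pair_eq hu0 hc (-b)
      refine ⟨z - y, ⟨msp_sub hzM hyM, ?_⟩, y, ⟨hyM, by rw [hyφ]⟩, sub_add_cancel z y⟩
      rw [pairF_sub hwq, hyφ]
      linarith
  rw [hLHS, hmA, hmB, hsum, (hTcl (-(a + b))).closure_eq]

end MultiRisk
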